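/- Let μ be a finite measure on a measurable space X with total mass γ₀ = μ(X) ∈ (0, ∞), let K > 0, ε > 0, and let 0 ≤ a satisfy a·γ₀ < K⁴ε⁴/(16 + K⁴ε⁴). Let g, g₀ be densities with respect to μ with d_H²(g, g₀) ≥ K²ε², and let g_a := a + (1 − aγ₀)·g and g_{0,a} := a + (1 − aγ₀)·g₀ be the shifted densities. Then the constant α := (1 − aγ₀) − 4√(aγ₀(1 − aγ₀))/(K²ε²) is strictly positive, and d_H²(g, g₀) ≤ (1/α)·d_H²(g_a, g_{0,a}). -/

import Mathlib

open MeasureTheory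
set_option maxHeartbeats 1000000

private lemma sqrt_add_le' {a b : ℝ} (ha : 0 ≤ a) (hb : 0 ≤ b) :
    Real.sqrt (a + b) ≤ Real.sqrt a + Real.sqrt b := by
  have h := Real.sqrt_le_sqrt (show a + b ≤ (Real.sqrt a + Real.sqrt b) ^ 2 by
    nlinarith [Real.sq_sqrt ha, Real.sq_sqrt hb, Real.sqrt_nonneg a, Real.sqrt_nonneg b])
  rwa [Real.sqrt_sq (by positivity)] at h

/-- pointwise key inequality -/
private lemma pointwise_key {s a t gx g₀x : ℝ} (hs0 : 0 ≤ s) (hs1 : s ≤ 1) (ha : 0 ≤ a)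
    (ht : 0 < t) (hg : 0 ≤ gx) (hg₀ : 0 ≤ g₀x) :
    (1 - s - Real.sqrt ((1 - s) * a) / t) * (Real.sqrt gx - Real.sqrt g₀x) ^ 2
      - Real.sqrt ((1 - s) * a) * t
      ≤ (Real.sqrt (a + (1 - s) * gx) - Real.sqrt (a + (1 - s) * g₀x)) ^ 2 := by
  set m := Real.sqrt (1 - s) with hm
  set k := Real.sqrt ((1 - s) * a) with hk
  have hs : (0:ℝ) ≤ 1 - s := by linarith
  have hm2 : m ^ 2 = 1 - s := Real.sq_sqrt hs
  have hkm : k = m * Real.sqrt a := Real.sqrt_mul hs a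
  set f := Real.sqrt gx - Real.sqrt g₀x with hf
  set p := Real.sqrt (a + (1 - s) * gx) - m * Real.sqrt gx with hp
  set q := Real.sqrt (a + (1 - s) * g₀x) - m * Real.sqrt g₀x with hq
  have hmul : ∀ y : ℝ, 0 ≤ y → Real.sqrt ((1 - s) * y) = m * Real.sqrt y :=
    fun y _ => Real.sqrt_mul hs y
  have hp0 : 0 ≤ p := by
    have : Real.sqrt ((1 - s) * gx) ≤ Real.sqrt (a + (1 - s) * gx) :=
      Real.sqrt_le_sqrt (by linarith)
    rw [hmul gx hg] at this; simp only [hp]; linarith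
  have hp1 : p ≤ Real.sqrt a := by
    have := sqrt_add_le' ha (mul_nonneg hs hg)
    rw [hmul gx hg] at this; simp only [hp]; linarith
  have hq0 : 0 ≤ q := by
    have : Real.sqrt ((1 - s) * g₀x) ≤ Real.sqrt (a + (1 - s) * g₀x) :=
      Real.sqrt_le_sqrt (by linarith)
    rw [hmul g₀x hg₀] at this; simp only [hq]; linarith
  have hq1 : q ≤ Real.sqrt a := by
    have := sqrt_add_le' ha (mul_nonneg hs hg₀)
    rw [hmul g₀x hg₀] at this; simp only [hq]; linarith
  have hid : Real.sqrt (a + (1 - s) * gx) - Real.sqrt (a + (1 - s) * g₀x)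
      = m * f + (p - q) := by simp only [hp, hq, hf]; ring
  rw [hid]
  have hd : |p - q| ≤ Real.sqrt a := abs_le.mpr ⟨by linarith, by linarith⟩
  have hm0 : 0 ≤ m := Real.sqrt_nonneg _
  have hk0 : 0 ≤ k := Real.sqrt_nonneg _
  -- m * f * (p - q) ≥ -(k * |f|)
  have h1 : -(k * |f|) ≤ m * f * (p - q) := by
    have h2 : |m * f * (p - q)| ≤ k * |f| := by
      rw [abs_mul, abs_mul, abs_of_nonneg hm0, hkm]
      calc m * |f| * |p - q| ≤ m * |f| * Real.sqrt a := by
            apply mul_le_mul_of_nonneg_left hd (by positivity)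
        _ = m * Real.sqrt a * |f| := by ring
    linarith [neg_abs_le (m * f * (p - q))]
  -- |f| ≤ (t^2 + f^2) / (2t)
  have h3 : 2 * t * |f| ≤ t ^ 2 + f ^ 2 := by
    nlinarith [sq_nonneg (|f| - t), sq_abs f]
  have h4 : k * (2 * t * |f|) ≤ k * (t ^ 2 + f ^ 2) := by
    apply mul_le_mul_of_nonneg_left h3 hk0
  have hsq : 0 ≤ (p - q) ^ 2 := sq_nonneg _
  have expand : (m * f + (p - q)) ^ 2 = m ^ 2 * f ^ 2 + 2 * (m * f * (p - q)) + (p - q) ^ 2 := by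
    ring
  rw [expand, hm2]
  have habs : 0 ≤ |f| := abs_nonneg f
  -- goal: (1 - s - k/t) f² - k t ≤ (1-s) f² + 2(m f (p-q)) + (p-q)²
  have hdivt : (1 - s - k / t) * f ^ 2 - k * t
      = (1 - s) * f ^ 2 - k * (t ^ 2 + f ^ 2) / t := by
    field_simp; ring
  rw [hdivt]
  have h5 : k * (t ^ 2 + f ^ 2) / t ≥ 2 * (k * |f|) := by
    rw [ge_iff_le, le_div_iff₀ ht]
    nlinarith
  clear_value m k f p q
  linarith [h1, h5, hsq]

theorem hellinger_le_inv_alpha_mul_shifted_hellinger {X : Type*} [MeasurableSpace X]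
    (μ : Measure X) [IsFiniteMeasure μ]
    (γ₀ : ℝ) (hγ₀ : γ₀ = (μ Set.univ).toReal) (hγpos : 0 < γ₀)
    (K ε : ℝ) (hK : 0 < K) (hε : 0 < ε)
    (a : ℝ) (ha : 0 ≤ a)
    (haγ : a * γ₀ < K ^ 4 * ε ^ 4 / (16 + K ^ 4 * ε ^ 4))
    (g g₀ : X → ℝ) (hgm : Measurable g) (hg₀m : Measurable g₀)
    (hg0 : ∀ x, 0 ≤ g x) (hg₀0 : ∀ x, 0 ≤ g₀ x)
    (hgi : Integrable g μ) (hg₀i : Integrable g₀ μ)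
    (hg1 : ∫ x, g x ∂μ = 1) (hg₀1 : ∫ x, g₀ x ∂μ = 1)
    (hsep : K ^ 2 * ε ^ 2 ≤ ∫ x, (Real.sqrt (g x) - Real.sqrt (g₀ x)) ^ 2 ∂μ) :
    0 < (1 - a * γ₀) - 4 * Real.sqrt (a * γ₀ * (1 - a * γ₀)) / (K ^ 2 * ε ^ 2) ∧
      ∫ x, (Real.sqrt (g x) - Real.sqrt (g₀ x)) ^ 2 ∂μ
        ≤ (1 / ((1 - a * γ₀) - 4 * Real.sqrt (a * γ₀ * (1 - a * γ₀)) / (K ^ 2 * ε ^ 2)))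
            * ∫ x, (Real.sqrt (a + (1 - a * γ₀) * g x)
                - Real.sqrt (a + (1 - a * γ₀) * g₀ x)) ^ 2 ∂μ := by
  set s := a * γ₀ with hsdef
  set c := K ^ 2 * ε ^ 2 with hcdef
  have hc : 0 < c := by positivity
  have hc2 : c ^ 2 = K ^ 4 * ε ^ 4 := by rw [hcdef]; ring
  have hs0 : 0 ≤ s := mul_nonneg ha hγpos.le
  have h16 : (0:ℝ) < 16 + K ^ 4 * ε ^ 4 := by positivity
  have hprod : s * (16 + c ^ 2) < c ^ 2 := by
    rw [hc2]; exact (lt_div_iff₀ h16).mp haγ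
  have hs1 : s < 1 := by nlinarith
  -- alpha positivity
  have h16s : 16 * s < (1 - s) * c ^ 2 := by nlinarith
  have hkey : 16 * (s * (1 - s)) < ((1 - s) * c) ^ 2 := by nlinarith
  have hsqrtlt : 4 * Real.sqrt (s * (1 - s)) < (1 - s) * c := by
    have h1 : Real.sqrt (16 * (s * (1 - s))) < Real.sqrt (((1 - s) * c) ^ 2) :=
      Real.sqrt_lt_sqrt (by nlinarith) hkey
    rwa [Real.sqrt_mul (by norm_num : (16:ℝ) ≥ 0) _,
      Real.sqrt_sq (by nlinarith : 0 ≤ (1 - s) * c),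
      show Real.sqrt 16 = 4 by
        rw [show (16:ℝ) = 4 ^ 2 by norm_num, Real.sqrt_sq (by norm_num)]] at h1
  have hα : 0 < (1 - s) - 4 * Real.sqrt (s * (1 - s)) / c := by
    rw [sub_pos, div_lt_iff₀ hc]; linarith
  refine ⟨hα, ?_⟩
  -- notation
  set H2 := ∫ x, (Real.sqrt (g x) - Real.sqrt (g₀ x)) ^ 2 ∂μ with hH2def
  have hH2c : c ≤ H2 := hsep
  have hH2pos : 0 < H2 := lt_of_lt_of_le hc hH2c
  -- integrability of f^2
  have hfm : Measurable fun x => (Real.sqrt (g x) - Real.sqrt (g₀ x)) ^ 2 :=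
    ((hgm.sqrt.sub hg₀m.sqrt).pow_const 2)
  have hbnd : ∀ x, (Real.sqrt (g x) - Real.sqrt (g₀ x)) ^ 2 ≤ 2 * g x + 2 * g₀ x := by
    intro x
    nlinarith [Real.sq_sqrt (hg0 x), Real.sq_sqrt (hg₀0 x),
      sq_nonneg (Real.sqrt (g x) + Real.sqrt (g₀ x))]
  have hbi : Integrable (fun x => 2 * g x + 2 * g₀ x) μ :=
    (hgi.const_mul 2).add (hg₀i.const_mul 2)
  have I2 : Integrable (fun x => (Real.sqrt (g x) - Real.sqrt (g₀ x)) ^ 2) μ := by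
    refine hbi.mono' hfm.aestronglyMeasurable ?_
    filter_upwards with x
    rw [Real.norm_eq_abs, abs_of_nonneg (sq_nonneg _)]
    exact hbnd x
  -- H2 ≤ 4
  have hH2_4 : H2 ≤ 4 := by
    have := integral_mono I2 hbi hbnd
    rw [integral_add (hgi.const_mul 2) (hg₀i.const_mul 2), integral_const_mul,
      integral_const_mul, hg1, hg₀1] at this
    rw [hH2def]; linarith
  -- choice of t
  set t := Real.sqrt H2 / Real.sqrt γ₀ with htdef
  have hγs : 0 < Real.sqrt γ₀ := Real.sqrt_pos.mpr hγpos
  have hH2s : 0 < Real.sqrt H2 := Real.sqrt_pos.mpr hH2pos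
  have ht : 0 < t := div_pos hH2s hγs
  set k := Real.sqrt ((1 - s) * a) with hkdef
  -- integrability of the shifted integrand
  have hnn : ∀ x, 0 ≤ a + (1 - s) * g x := fun x => by nlinarith [hg0 x]
  have hnn₀ : ∀ x, 0 ≤ a + (1 - s) * g₀ x := fun x => by nlinarith [hg₀0 x]
  have hsm : Measurable fun x =>
      (Real.sqrt (a + (1 - s) * g x) - Real.sqrt (a + (1 - s) * g₀ x)) ^ 2 :=
    (((measurable_const.add (hgm.const_mul (1 - s))).sqrt.sub
      ((measurable_const.add (hg₀m.const_mul (1 - s))).sqrt)).pow_const 2)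
  have hbnd2 : ∀ x, (Real.sqrt (a + (1 - s) * g x) - Real.sqrt (a + (1 - s) * g₀ x)) ^ 2
      ≤ (2 * a + 2 * ((1 - s) * g x)) + (2 * a + 2 * ((1 - s) * g₀ x)) := by
    intro x
    nlinarith [Real.sq_sqrt (hnn x), Real.sq_sqrt (hnn₀ x),
      sq_nonneg (Real.sqrt (a + (1 - s) * g x) + Real.sqrt (a + (1 - s) * g₀ x))]
  have hbi2 : Integrable (fun x =>
      (2 * a + 2 * ((1 - s) * g x)) + (2 * a + 2 * ((1 - s) * g₀ x))) μ :=
    ((integrable_const (2 * a)).add ((hgi.const_mul (1 - s)).const_mul 2)).add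
      ((integrable_const (2 * a)).add ((hg₀i.const_mul (1 - s)).const_mul 2))
  have Ia : Integrable (fun x =>
      (Real.sqrt (a + (1 - s) * g x) - Real.sqrt (a + (1 - s) * g₀ x)) ^ 2) μ := by
    refine hbi2.mono' hsm.aestronglyMeasurable ?_
    filter_upwards with x
    rw [Real.norm_eq_abs, abs_of_nonneg (sq_nonneg _)]
    exact hbnd2 x
  set Ha := ∫ x, (Real.sqrt (a + (1 - s) * g x) - Real.sqrt (a + (1 - s) * g₀ x)) ^ 2 ∂μ
    with hHadef
  -- lower bound integrand
  have hL : Integrable (fun x =>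
      (1 - s - k / t) * (Real.sqrt (g x) - Real.sqrt (g₀ x)) ^ 2 - k * t) μ :=
    (I2.const_mul _).sub (integrable_const _)
  have hLint : ∫ x, ((1 - s - k / t) * (Real.sqrt (g x) - Real.sqrt (g₀ x)) ^ 2 - k * t) ∂μ
      = (1 - s - k / t) * H2 - k * t * γ₀ := by
    rw [integral_sub (I2.const_mul _) (integrable_const _), integral_const_mul, integral_const,
      smul_eq_mul, measureReal_def, ← hγ₀, ← hH2def]
    ring
  have step1 : (1 - s - k / t) * H2 - k * t * γ₀ ≤ Ha := by
    rw [← hLint]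
    exact integral_mono hL Ia (fun x => pointwise_key hs0 hs1.le ha ht (hg0 x) (hg₀0 x))
  -- sqrt identities
  have hkγ : k * Real.sqrt γ₀ = Real.sqrt (s * (1 - s)) := by
    rw [hkdef, ← Real.sqrt_mul (mul_nonneg (by linarith) ha)]
    congr 1
    rw [hsdef]; ring
  have htγ : t * γ₀ = Real.sqrt H2 * Real.sqrt γ₀ := by
    rw [show t * γ₀ = Real.sqrt H2 / Real.sqrt γ₀ * γ₀ from rfl, div_mul_eq_mul_div,
      div_eq_iff (ne_of_gt hγs), mul_assoc, Real.mul_self_sqrt hγpos.le]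
  have hHt : H2 / t = Real.sqrt H2 * Real.sqrt γ₀ := by
    rw [htdef, div_div_eq_mul_div, div_eq_iff (ne_of_gt hH2s)]
    nlinarith [Real.mul_self_sqrt hH2pos.le]
  have key2 : k * t * γ₀ + k / t * H2 = 2 * Real.sqrt (s * (1 - s)) * Real.sqrt H2 := by
    have e1 : k * t * γ₀ + k / t * H2 = k * (t * γ₀) + k * (H2 / t) := by ring
    rw [e1, htγ, hHt, ← hkγ]; ring
  have hw0 : 0 ≤ Real.sqrt (s * (1 - s)) := Real.sqrt_nonneg _
  have h2c : c * Real.sqrt H2 ≤ 2 * H2 := by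
    have h4' : Real.sqrt H2 ≤ 2 := by
      have h := Real.sqrt_le_sqrt hH2_4
      rwa [show Real.sqrt 4 = 2 by
        rw [show (4:ℝ) = 2 ^ 2 by norm_num, Real.sqrt_sq (by norm_num)]] at h
    nlinarith [Real.mul_self_sqrt hH2pos.le, hH2s.le]
  have step2' : 2 * Real.sqrt (s * (1 - s)) * Real.sqrt H2
      ≤ 4 * Real.sqrt (s * (1 - s)) / c * H2 := by
    rw [div_mul_eq_mul_div, le_div_iff₀ hc]
    nlinarith [mul_le_mul_of_nonneg_left h2c hw0]
  have step2 : ((1 - s) - 4 * Real.sqrt (s * (1 - s)) / c) * H2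
      ≤ (1 - s - k / t) * H2 - k * t * γ₀ := by
    have e2 : (1 - s - k / t) * H2 - k * t * γ₀
        = (1 - s) * H2 - (k * t * γ₀ + k / t * H2) := by ring
    rw [e2, key2]
    have e3 : ((1 - s) - 4 * Real.sqrt (s * (1 - s)) / c) * H2
        = (1 - s) * H2 - 4 * Real.sqrt (s * (1 - s)) / c * H2 := by ring
    rw [e3]
    linarith
  rw [one_div_mul_eq_div]
  rw [le_div_iff₀ hα]
  calc H2 * (1 - s - 4 * Real.sqrt (s * (1 - s)) / c)
      = ((1 - s) - 4 * Real.sqrt (s * (1 - s)) / c) * H2 := by ring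
    _ ≤ (1 - s - k / t) * H2 - k * t * γ₀ := step2
    _ ≤ Ha := step1
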